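/- Let k be a field and B a finite-dimensional commutative local k-algebra equipped with a k-algebra homomorphism π : B → k. Let R ⊆ S be an extension of k-algebras such that S is a formally étale R-algebra, and let ∂ : R → S ⊗_k B be a B-operator from R to S whose underlying homomorphism ∂₀ : R → S is the inclusion. Then ∂ extends uniquely to a B-operator on S: there is a unique k-algebra homomorphism ∂' : S → S ⊗_k B such that (id_S ⊗ π) ∘ ∂' = id_S and ∂'|_R = ∂. -/

import Mathlib

open TensorProduct

/-- The underlying homomorphism extractor `∂₀ = (id_T ⊗ π) ∘ ∂` of a `B`-operator:
the algebra map `T ⊗[k] B → T` induced by `π : B → k` and `T ⊗[k] k ≅ T`. -/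
noncomputable def BOp.counit (k T B : Type*) [CommSemiring k] [CommSemiring T] [Algebra k T]
    [CommSemiring B] [Algebra k B] (π : B →ₐ[k] k) : T ⊗[k] B →ₐ[k] T :=
  (Algebra.TensorProduct.rid k k T).toAlgHom.comp
    (Algebra.TensorProduct.map (AlgHom.id k T) π)

theorem BOp.counit_tmul (k T B : Type*) [CommSemiring k] [CommSemiring T] [Algebra k T]
    [CommSemiring B] [Algebra k B] (π : B →ₐ[k] k) (t : T) (b : B) :
    BOp.counit k T B π (t ⊗ₜ b) = π b • t := by
  simp [BOp.counit]

theorem BOp.counit_tmul_one (k T B : Type*) [CommSemiring k] [CommSemiring T] [Algebra k T]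
    [CommSemiring B] [Algebra k B] (π : B →ₐ[k] k) (t : T) :
    BOp.counit k T B π (t ⊗ₜ 1) = t := by
  simp [BOp.counit_tmul]

/-- Formally étale algebras lift uniquely along surjections with nilpotent kernel,
even when the source ring lives in a larger universe (provided it is `u`-small). -/
theorem BOp.etale_lift.{u, v} {R S : Type u} [CommRing R] [CommRing S] [Algebra R S]
    [Algebra.FormallyEtale R S] {A : Type v} [CommRing A] [Small.{u} A] [Algebra R A]
    (c : A →ₐ[R] S) (hcsurj : Function.Surjective c)
    (hnil : IsNilpotent (RingHom.ker (c : A →+* S))) :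
    ∃! l : S →ₐ[R] A, c.comp l = AlgHom.id R S := by
  let e : A ≃ₐ[R] Shrink.{u} A := (Shrink.algEquiv R A).symm
  let c' : Shrink.{u} A →ₐ[R] S := c.comp e.symm.toAlgHom
  have hc' : ∀ x, c' x = c (e.symm x) := fun _ => rfl
  have hc'surj : Function.Surjective c' := by
    intro s
    obtain ⟨a, ha⟩ := hcsurj s
    exact ⟨e a, by rw [hc', e.symm_apply_apply, ha]⟩
  have hker' : RingHom.ker (c' : Shrink.{u} A →+* S) =
      Ideal.map (e : A ≃+* Shrink.{u} A) (RingHom.ker (c : A →+* S)) := by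
    ext x
    rw [RingHom.mem_ker, ← Ideal.symm_apply_mem_of_equiv_iff, RingHom.mem_ker]
    exact Iff.rfl
  have hnil' : IsNilpotent (RingHom.ker (c' : Shrink.{u} A →+* S)) := by
    obtain ⟨n, hn⟩ := hnil
    refine ⟨n, ?_⟩
    rw [hker', ← Ideal.map_pow, hn]
    simpa using Ideal.map_bot
  let l' : S →ₐ[R] Shrink.{u} A :=
    Algebra.FormallySmooth.liftOfSurjective (AlgHom.id R S) c' hc'surj hnil'
  have hl' : ∀ s, c' (l' s) = s := fun s =>
    Algebra.FormallySmooth.liftOfSurjective_apply (AlgHom.id R S) c' hc'surj hnil' s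
  refine ⟨e.symm.toAlgHom.comp l', ?_, ?_⟩
  · ext s
    exact hl' s
  · intro g hg
    have key : e.toAlgHom.comp g = e.toAlgHom.comp (e.symm.toAlgHom.comp l') := by
      apply Algebra.FormallyUnramified.lift_unique _ hnil'
      ext s
      show Ideal.Quotient.mk _ (e (g s)) = Ideal.Quotient.mk _ (e (e.symm (l' s)))
      rw [e.apply_symm_apply]
      rw [Ideal.Quotient.eq]
      show e (g s) - l' s ∈ RingHom.ker (c' : Shrink.{u} A →+* S)
      rw [RingHom.mem_ker, map_sub]
      have h1 : c' (e (g s)) = c (g s) := by rw [hc', e.symm_apply_apply]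
      have h2 : c (g s) = s := AlgHom.congr_fun hg s
      rw [show (c' : Shrink.{u} A →+* S) (e (g s)) = c' (e (g s)) from rfl]
      rw [h1, h2]
      rw [show (c' : Shrink.{u} A →+* S) (l' s) = c' (l' s) from rfl]
      rw [hl' s, sub_self]
    ext s
    apply e.injective
    exact AlgHom.congr_fun key s

/-- Let `B` be a finite-dimensional commutative local `k`-algebra with a `k`-algebra map
`π : B → k`, and let `R ⊆ S` be an extension of `k`-algebras with `S` formally étale over `R`.
If `δ : R → S ⊗[k] B` is a `B`-operator whose underlying homomorphism `δ₀ : R → S` is the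
inclusion, then `δ` extends uniquely to a `B`-operator on `S`: there is a unique `k`-algebra
homomorphism `δ' : S → S ⊗[k] B` with `(id_S ⊗ π) ∘ δ' = id_S` and `δ'|_R = δ`. -/
theorem BOperator.extends_uniquely_of_formallyEtale.{u}
    (k B : Type*) [Field k] [CommRing B] [Algebra k B]
    [FiniteDimensional k B] [IsLocalRing B] (π : B →ₐ[k] k)
    (R S : Type u) [CommRing R] [Algebra k R] [CommRing S] [Algebra k S]
    [Algebra R S] [IsScalarTower k R S]
    (hRS : Function.Injective (algebraMap R S))
    [Algebra.FormallyEtale R S]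
    (δ : R →ₐ[k] S ⊗[k] B)
    (h0 : (BOp.counit k S B π).comp δ = IsScalarTower.toAlgHom k R S) :
    ∃! δ' : S →ₐ[k] S ⊗[k] B,
      (BOp.counit k S B π).comp δ' = AlgHom.id k S ∧
        δ'.comp (IsScalarTower.toAlgHom k R S) = δ := by
  -- the kernel of π is nilpotent
  have hartin : IsArtinianRing B := isArtinian_of_tower k inferInstance
  have hπsurj : Function.Surjective π := fun c => ⟨algebraMap k B c, by simp⟩
  have hkermax : (RingHom.ker (π : B →+* k)).IsMaximal :=
    RingHom.ker_isMaximal_of_surjective _ hπsurj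
  have hker : RingHom.ker (π : B →+* k) = IsLocalRing.maximalIdeal B :=
    IsLocalRing.eq_maximalIdeal hkermax
  have hnil : IsNilpotent (RingHom.ker (π : B →+* k)) := by
    rw [hker, ← IsLocalRing.jacobson_eq_maximalIdeal (⊥ : Ideal B) bot_ne_top]
    exact IsArtinianRing.isNilpotent_jacobson_bot
  -- S ⊗[k] B is u-small
  have hfin : Module.Finite S (S ⊗[k] B) := Module.Finite.base_change k S B
  obtain ⟨n, f, hf⟩ := Module.Finite.exists_fin' S (S ⊗[k] B)
  have hsmall : Small.{u} (S ⊗[k] B) := small_of_surjective hf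
  -- the ideal I = ker(counit) in S ⊗ B is nilpotent
  set c : S ⊗[k] B →ₐ[k] S := BOp.counit k S B π with hc
  set I : Ideal (S ⊗[k] B) := RingHom.ker (c : S ⊗[k] B →+* S) with hI
  set J : Ideal (S ⊗[k] B) :=
    Ideal.map (Algebra.TensorProduct.includeRight : B →ₐ[k] S ⊗[k] B)
      (RingHom.ker (π : B →+* k)) with hJ
  have hc_tmul_one : ∀ s : S, c (s ⊗ₜ (1 : B)) = s := fun s =>
    BOp.counit_tmul_one k S B π s
  have key : ∀ x : S ⊗[k] B, x - (c x) ⊗ₜ (1 : B) ∈ J := by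
    intro x
    induction x using TensorProduct.induction_on with
    | zero => simp
    | tmul s b =>
        have h1 : c (s ⊗ₜ b) = π b • s := BOp.counit_tmul k S B π s b
        have h2 : (s ⊗ₜ (algebraMap k B (π b)) : S ⊗[k] B) = (π b • s) ⊗ₜ (1 : B) := by
          rw [Algebra.algebraMap_eq_smul_one, TensorProduct.tmul_smul,
            TensorProduct.smul_tmul']
        have h3 : (s ⊗ₜ[k] b : S ⊗[k] B) - s ⊗ₜ[k] (algebraMap k B (π b)) =
            s ⊗ₜ[k] (b - algebraMap k B (π b)) := by
          rw [TensorProduct.tmul_sub]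
        rw [h1, ← h2, h3]
        have hm : b - algebraMap k B (π b) ∈ RingHom.ker (π : B →+* k) := by
          simp [RingHom.mem_ker, map_sub]
        have hmem : ((1 : S) ⊗ₜ (b - algebraMap k B (π b)) : S ⊗[k] B) ∈ J :=
          Ideal.mem_map_of_mem _ hm
        have heq : (s ⊗ₜ (b - algebraMap k B (π b)) : S ⊗[k] B) =
            (s ⊗ₜ (1 : B)) * ((1 : S) ⊗ₜ (b - algebraMap k B (π b))) := by
          rw [Algebra.TensorProduct.tmul_mul_tmul, mul_one, one_mul]
        rw [heq]
        exact Ideal.mul_mem_left _ _ hmem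
    | add x y hx hy =>
        have : (x + y) - (c (x + y)) ⊗ₜ (1 : B) =
            (x - (c x) ⊗ₜ (1 : B)) + (y - (c y) ⊗ₜ (1 : B)) := by
          rw [map_add, TensorProduct.add_tmul]; ring
        rw [this]
        exact add_mem hx hy
  have hIJ : I ≤ J := by
    intro x hx
    have hcx : c x = 0 := hx
    have := key x
    rwa [hcx, TensorProduct.zero_tmul, sub_zero] at this
  have hInil : IsNilpotent I := by
    obtain ⟨m, hm⟩ := hnil
    refine ⟨m, ?_⟩
    have h1 : I ^ m ≤ J ^ m := Ideal.pow_right_mono hIJ m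
    have h2 : J ^ m = ⊥ := by
      rw [hJ, ← Ideal.map_pow, hm]
      simpa using Ideal.map_bot
    exact le_bot_iff.mp (h2 ▸ h1)
  -- set up the R-algebra structure on S ⊗ B via δ
  letI : Algebra R (S ⊗[k] B) := δ.toRingHom.toAlgebra
  have halg : ∀ r : R, algebraMap R (S ⊗[k] B) r = δ r := fun _ => rfl
  have hδ0 : ∀ r : R, c (δ r) = algebraMap R S r := by
    intro r
    have := AlgHom.congr_fun h0 r
    simpa using this
  let cR : S ⊗[k] B →ₐ[R] S :=
    { toRingHom := (c : S ⊗[k] B →+* S)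
      commutes' := fun r => hδ0 r }
  have hcRsurj : Function.Surjective cR := fun s => ⟨s ⊗ₜ (1 : B), hc_tmul_one s⟩
  have hcRker : RingHom.ker (cR : S ⊗[k] B →+* S) = I := rfl
  obtain ⟨l, hl, hluniq⟩ := BOp.etale_lift cR hcRsurj (hcRker ▸ hInil)
  have hcl : ∀ s : S, c (l s) = s := fun s => AlgHom.congr_fun hl s
  -- l is k-linear
  let δ' : S →ₐ[k] S ⊗[k] B :=
    { toRingHom := l.toRingHom
      commutes' := by
        intro x
        show l (algebraMap k S x) = algebraMap k (S ⊗[k] B) x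
        have h1 : algebraMap k S x = algebraMap R S (algebraMap k R x) :=
          IsScalarTower.algebraMap_apply k R S x
        rw [h1, l.commutes, halg, δ.commutes] }
  have hδ'l : ∀ s, δ' s = l s := fun _ => rfl
  refine ⟨δ', ⟨?_, ?_⟩, ?_⟩
  · ext s
    exact hcl s
  · ext r
    show δ' (algebraMap R S r) = δ r
    rw [hδ'l, l.commutes, halg]
  · rintro δ'' ⟨h1, h2⟩
    -- δ'' is R-linear
    let g : S →ₐ[R] S ⊗[k] B :=
      { toRingHom := δ''.toRingHom
        commutes' := by
          intro r
          show δ'' (algebraMap R S r) = algebraMap R (S ⊗[k] B) r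
          rw [halg]
          exact AlgHom.congr_fun h2 r }
    have hgl : g = l := by
      apply hluniq
      ext s
      exact AlgHom.congr_fun h1 s
    ext s
    show δ'' s = δ' s
    rw [hδ'l, ← hgl]
    rfl
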